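/- Let F be a fixed optimal shadows-minimal cover of T with the maximum number of twin links. Let a,b be twins with stem s, let T_s = P(sa) ∪ P(sb) be the subtree of T rooted at s, and let F' be the set of links of F with at least one endpoint in T_s. Then either F' = {ab, sz} for some node z ∉ T_s, or F' = {ax, by} for some nodes x, y ∉ T_s. -/

import Mathlib

open scoped Classical

namespace TAP

/-- A rooted tree on vertex set `V`, given by a parent function. -/
structure Tree (V : Type) where
  root : V
  parent : V → V
  parent_root : parent root = root
  reach : ∀ v, ∃ n, parent^[n] v = root

namespace Tree

variable {V : Type} (t : Tree V)

/-- `t.desc w v` : `v` lies in the rooted subtree `T_w`, i.e. `w` is an ancestor of `v` or `w = v`. -/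
def desc (w v : V) : Prop := ∃ n, t.parent^[n] v = w

/-- The depth of a node (its distance to the root). -/
noncomputable def depth (v : V) : ℕ :=
  @Nat.find (fun n => t.parent^[n] v = t.root) (Classical.decPred _) (t.reach v)

/-- `v` is a leaf of the tree: it is not the root and it has no children. -/
def IsLeaf (v : V) : Prop := v ≠ t.root ∧ ∀ u, u ≠ v → t.parent u ≠ v

/-- The tree edge `(w, parent w)` (for `w ≠ root`) lies on the tree path `P(u,v)`. -/
def onPath (w u v : V) : Prop :=
  (t.desc w u ∧ ¬ t.desc w v) ∨ (t.desc w v ∧ ¬ t.desc w u)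

/-- The node `c` lies on the tree path `P(u,v)`. -/
def onPathNode (c u v : V) : Prop :=
  (t.desc c u ∨ t.desc c v) ∧ ∀ w, t.desc w u → t.desc w v → t.desc w c

/-- `u` is the least common ancestor of `a` and `b`. -/
def IsLCA (u a b : V) : Prop :=
  t.desc u a ∧ t.desc u b ∧ ∀ w, t.desc w a → t.desc w b → t.desc w u

lemma desc_refl (v : V) : t.desc v v := ⟨0, rfl⟩

lemma desc_parent (v : V) : t.desc (t.parent v) v := ⟨1, rfl⟩

lemma desc_trans {u v w : V} (h1 : t.desc u v) (h2 : t.desc w u) : t.desc w v := by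
  obtain ⟨n, hn⟩ := h1; obtain ⟨m, hm⟩ := h2
  exact ⟨m + n, by rw [Function.iterate_add_apply, hn, hm]⟩

lemma iterate_root (n : ℕ) : t.parent^[n] t.root = t.root := by
  induction n with
  | zero => rfl
  | succ k ih => rw [Function.iterate_succ_apply', ih, t.parent_root]

lemma eq_root_of_iterate {n : ℕ} {v : V} (hn : 0 < n) (h : t.parent^[n] v = v) :
    v = t.root := by
  obtain ⟨k, hk⟩ := t.reach v
  have hmul : ∀ m, t.parent^[m * n] v = v := by
    intro m
    induction m with
    | zero => simp
    | succ j ih => rw [Nat.succ_mul, Function.iterate_add_apply, h, ih]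
  have hkn : k ≤ k * n := Nat.le_mul_of_pos_right k hn
  have : t.parent^[k * n] v = t.root := by
    have : k * n = (k * n - k) + k := by omega
    rw [this, Function.iterate_add_apply, hk, iterate_root]
  rw [hmul k] at this
  exact this

lemma desc_antisymm {u v : V} (h1 : t.desc u v) (h2 : t.desc v u) : u = v := by
  obtain ⟨n, hn⟩ := h1; obtain ⟨m, hm⟩ := h2
  rcases Nat.eq_zero_or_pos n with rfl | hpos
  · exact hn.symm
  · have : t.parent^[m + n] v = v := by rw [Function.iterate_add_apply, hn, hm]
    have hv : v = t.root := t.eq_root_of_iterate (by omega) this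
    subst hv
    rw [iterate_root] at hn
    exact hn.symm

lemma desc_root (v : V) : t.desc t.root v := t.reach v

lemma eq_root_of_desc_root {v : V} (h : t.desc v t.root) : v = t.root := by
  obtain ⟨n, hn⟩ := h; rw [iterate_root] at hn; exact hn.symm

lemma desc_total {u v w : V} (h1 : t.desc u w) (h2 : t.desc v w) :
    t.desc u v ∨ t.desc v u := by
  obtain ⟨n, hn⟩ := h1; obtain ⟨m, hm⟩ := h2
  rcases le_total n m with h | h
  · right
    refine ⟨m - n, ?_⟩
    rw [← hn, ← Function.iterate_add_apply]
    rw [show m - n + n = m by omega, hm]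
  · left
    refine ⟨n - m, ?_⟩
    rw [← hm, ← Function.iterate_add_apply]
    rw [show n - m + m = n by omega, hn]

lemma desc_parent_of_ne {u v : V} (h : t.desc u v) (hne : u ≠ v) :
    t.desc u (t.parent v) := by
  obtain ⟨n, hn⟩ := h
  cases n with
  | zero => exact absurd hn.symm hne
  | succ k => exact ⟨k, by rwa [Function.iterate_succ_apply] at hn⟩

lemma leaf_desc_eq {a x : V} (ha : t.IsLeaf a) (h : t.desc a x) : x = a := by
  obtain ⟨n, hn⟩ := h
  cases n with
  | zero => exact hn
  | succ k =>
    exfalso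
    rw [Function.iterate_succ_apply'] at hn
    by_cases hp : t.parent^[k] x = a
    · have : a = t.root := t.eq_root_of_iterate (n := 1) (by omega) (by simpa using hp ▸ hn)
      exact ha.1 this
    · exact ha.2 _ hp hn

lemma parent_ne_self {v : V} (h : v ≠ t.root) : t.parent v ≠ v := by
  intro hp
  exact h (t.eq_root_of_iterate (n := 1) (by omega) (by simpa using hp))

lemma leaf_ne_parent {c : V} (hc : t.IsLeaf c) : c ≠ t.parent c :=
  fun h => t.parent_ne_self hc.1 h.symm

lemma not_leaf_parent {c : V} (hc : t.IsLeaf c) : ¬ t.IsLeaf (t.parent c) := by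
  intro h
  exact h.2 c (t.leaf_ne_parent hc) rfl

lemma exists_forall_desc (S : Finset V)
    (hchain : ∀ u ∈ S, ∀ v ∈ S, t.desc u v ∨ t.desc v u) (hne : S.Nonempty) :
    ∃ m ∈ S, ∀ w ∈ S, t.desc w m := by
  classical
  revert hchain hne
  induction S using Finset.induction_on with
  | empty => intro _ hne; exact absurd hne (by simp)
  | insert _ _ hu ih =>
    rename_i u S'
    intro hchain hne
    rcases S'.eq_empty_or_nonempty with rfl | hS'
    · refine ⟨u, by simp, ?_⟩
      intro w hw
      simp only [Finset.mem_insert, Finset.notMem_empty, or_false] at hw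
      subst hw; exact t.desc_refl _
    · obtain ⟨m, hm, hmax⟩ := ih (fun x hx y hy =>
        hchain x (Finset.mem_insert_of_mem hx) y (Finset.mem_insert_of_mem hy)) hS'
      rcases hchain u (Finset.mem_insert_self u S') m (Finset.mem_insert_of_mem hm) with h | h
      · refine ⟨m, Finset.mem_insert_of_mem hm, ?_⟩
        intro w hw
        rcases Finset.mem_insert.mp hw with rfl | hw'
        · exact h
        · exact hmax w hw'
      · refine ⟨u, Finset.mem_insert_self u S', ?_⟩
        intro w hw
        rcases Finset.mem_insert.mp hw with rfl | hw'
        · exact t.desc_refl _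
        · exact t.desc_trans h (hmax w hw')

lemma exists_isLCA [Fintype V] [DecidableEq V] (a b : V) : ∃ s, t.IsLCA s a b := by
  classical
  set S := Finset.univ.filter (fun w => t.desc w a ∧ t.desc w b) with hS
  have hne : S.Nonempty := ⟨t.root, by simp [hS, t.desc_root]⟩
  have hchain : ∀ u ∈ S, ∀ v ∈ S, t.desc u v ∨ t.desc v u := by
    intro u hu v hv
    simp only [hS, Finset.mem_filter] at hu hv
    exact t.desc_total hu.2.1 hv.2.1
  obtain ⟨m, hm, hmax⟩ := t.exists_forall_desc S hchain hne
  simp only [hS, Finset.mem_filter] at hm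
  exact ⟨m, hm.2.1, hm.2.2, fun w h1 h2 => hmax w (by simp [hS, h1, h2])⟩

lemma onPath_symm {w u v : V} (h : t.onPath w u v) : t.onPath w v u := h.symm


end Tree

variable {V : Type} [Fintype V] [DecidableEq V]

/-- The link `e` covers the tree edge `(w, parent w)`. -/
def covers (t : Tree V) (e : Sym2 V) (w : V) : Prop :=
  ∃ u v, e = s(u, v) ∧ t.onPath w u v

/-- Some link of `F` covers the tree edge `(w, parent w)`. -/
def coveredBy (t : Tree V) (F : Finset (Sym2 V)) (w : V) : Prop :=
  ∃ e ∈ F, covers t e w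

/-- `F` covers the tree: every tree edge is covered by some link of `F`
(equivalently, `T ∪ F` is 2-edge-connected). -/
def IsCover (t : Tree V) (F : Finset (Sym2 V)) : Prop :=
  ∀ w, w ≠ t.root → coveredBy t F w

/-- `e'` is a shadow of `e`, i.e. `P(e') ⊆ P(e)`. -/
def Shadow (t : Tree V) (e' e : Sym2 V) : Prop := ∀ w, covers t e' w → covers t e w

/-- `e'` is a proper shadow of `e`. -/
def ProperShadow (t : Tree V) (e' e : Sym2 V) : Prop :=
  Shadow t e' e ∧ ∃ w, covers t e w ∧ ¬ covers t e' w

/-- The link set `E` is closed under shadows. -/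
def ShadowClosed (t : Tree V) (E : Finset (Sym2 V)) : Prop :=
  ∀ e ∈ E, ∀ e' : Sym2 V, ¬ e'.IsDiag → Shadow t e' e → e' ∈ E

/-- `F` is an (inclusion-minimal) shadows-minimal cover: replacing any link of `F` by a
proper shadow of it destroys the covering property. -/
def ShadowsMinimal (t : Tree V) (F : Finset (Sym2 V)) : Prop :=
  IsCover t F ∧ (∀ e ∈ F, ¬ IsCover t (F.erase e)) ∧
  ∀ e ∈ F, ∀ e' : Sym2 V, ProperShadow t e' e → ¬ IsCover t (insert e' (F.erase e))

/-- `deg Y x` : the number of links of `Y` incident to `x`. -/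
noncomputable def deg (Y : Finset (Sym2 V)) (x : V) : ℕ := (Y.filter (fun e => x ∈ e)).card

/-! ### Contraction of a set of links -/

/-- `u` and `v` lie in the same 2-edge-connected component of `T ∪ I`,
i.e. they get identified in `T/I`. -/
def rel (t : Tree V) (I : Finset (Sym2 V)) (u v : V) : Prop :=
  ∀ w, w ≠ t.root → t.onPath w u v → coveredBy t I w

def relSetoid (t : Tree V) (I : Finset (Sym2 V)) : Setoid V where
  r := rel t I
  iseqv := by
    refine ⟨?_, ?_, ?_⟩
    · intro u w _ hp
      rcases hp with ⟨h1, h2⟩ | ⟨h1, h2⟩ <;> exact absurd h1 h2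
    · intro u v h w hw hp
      refine h w hw ?_
      rcases hp with ⟨h1, h2⟩ | ⟨h1, h2⟩
      · exact Or.inr ⟨h1, h2⟩
      · exact Or.inl ⟨h1, h2⟩
    · intro u v x h1 h2 w hw hp
      by_cases hv : t.desc w v
      · rcases hp with ⟨ha, hb⟩ | ⟨ha, hb⟩
        · exact h2 w hw (Or.inl ⟨hv, hb⟩)
        · exact h1 w hw (Or.inr ⟨hv, hb⟩)
      · rcases hp with ⟨ha, hb⟩ | ⟨ha, hb⟩
        · exact h1 w hw (Or.inl ⟨ha, hv⟩)
        · exact h2 w hw (Or.inr ⟨ha, hv⟩)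

/-- The node set of the contracted tree `T/I`. -/
abbrev QT (t : Tree V) (I : Finset (Sym2 V)) : Type := Quotient (relSetoid t I)

noncomputable instance instFintypeQT (t : Tree V) (I : Finset (Sym2 V)) : Fintype (QT t I) :=
  @Quotient.fintype V _ (relSetoid t I) (Classical.decRel _)

/-- The node of `T/I` corresponding to the node `x` of `T`. -/
def qm (t : Tree V) (I : Finset (Sym2 V)) (x : V) : QT t I := Quotient.mk (relSetoid t I) x

/-- The class of `u` is a (possibly compound) leaf of `T/I`. -/
def qleafRep (t : Tree V) (I : Finset (Sym2 V)) (u : V) : Prop :=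
  ¬ rel t I u t.root ∧ ∀ v, rel t I (t.parent v) u → rel t I v u

/-- The class of `u` lies in the rooted subtree of `T/I` rooted at the class of `v`. -/
def qdescRep (t : Tree V) (I : Finset (Sym2 V)) (v u : V) : Prop :=
  ∃ w, t.desc w u ∧ rel t I w v

/-- The class of `u` is a compound node of `T/I` (a contracted component, or the root). -/
def qcompoundRep (t : Tree V) (I : Finset (Sym2 V)) (u : V) : Prop :=
  (∃ w, w ≠ u ∧ rel t I u w) ∨ rel t I u t.root

/-- The node `x` of `T` lies in the rooted subtree of `T/I` whose root is the class `c`. -/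
def inT (t : Tree V) (I : Finset (Sym2 V)) (c : QT t I) (x : V) : Prop :=
  qdescRep t I c.out x

/-- The node `d` of `T/I` lies in the rooted subtree of `T/I` whose root is `c`. -/
def below (t : Tree V) (I : Finset (Sym2 V)) (c d : QT t I) : Prop := inT t I c d.out

/-- The class of `x` is matched by the matching `M`. -/
def matchedRep (t : Tree V) (I M : Finset (Sym2 V)) (x : V) : Prop :=
  ∃ e ∈ M, ∃ z, z ∈ e ∧ rel t I z x

/-- The class of `x` lies on the path of `T/I` between the classes of `u` and of `v`. -/
def qOnPathNode (t : Tree V) (I : Finset (Sym2 V)) (x u v : V) : Prop :=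
  (qdescRep t I x u ∨ qdescRep t I x v) ∧
  ∀ w, qdescRep t I w u → qdescRep t I w v → qdescRep t I w x

/-- The class of `x` is the least common ancestor in `T/I` of the classes of `a` and `b`. -/
def qIsLCA (t : Tree V) (I : Finset (Sym2 V)) (x a b : V) : Prop :=
  qdescRep t I x a ∧ qdescRep t I x b ∧
  ∀ w, qdescRep t I w a → qdescRep t I w b → qdescRep t I w x

/-- Depth of the class of `x` in `T/I`. -/
noncomputable def qdepth (t : Tree V) (I : Finset (Sym2 V)) (x : V) : ℕ :=
  (Finset.univ.filter (fun w => w ≠ t.root ∧ ¬ coveredBy t I w ∧ t.desc w x)).card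

/-- `u` is an up-node of (the class of) `a` in `T/I` : among all links of `E` leaving the
class of `a`, some link from the class of `a` to `u` has its other end as close as possible
to the root. -/
def qUpNode (t : Tree V) (I E : Finset (Sym2 V)) (a u : V) : Prop :=
  (∃ b, rel t I b a ∧ s(b, u) ∈ E) ∧ ¬ rel t I u a ∧
  ∀ b x, rel t I b a → s(b, x) ∈ E → ¬ rel t I x a → qdepth t I u ≤ qdepth t I x

/-- `s(a,b)` is a twin link of `T/I` : a link of `E` between two distinct leaves of `T/I`
whose contraction results in a new leaf. -/
def qTwinAt (t : Tree V) (I E : Finset (Sym2 V)) (a b : V) : Prop :=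
  qleafRep t I a ∧ qleafRep t I b ∧ ¬ rel t I a b ∧ s(a, b) ∈ E ∧
  qleafRep t (insert (s(a, b)) I) a

/-- The class of `x` is a stem of `T/I` : the least common ancestor of the two ends
of a twin link. -/
def qStem (t : Tree V) (I E : Finset (Sym2 V)) (x : V) : Prop :=
  ∃ a b, qTwinAt t I E a b ∧ qIsLCA t I x a b

/-! ### Twin links, stems, up-links and locked leaves in the original tree -/

/-- `a` and `b` are twins: two leaves such that the contraction of the link `ab`
results in a new leaf. -/
def TwinPair (t : Tree V) (a b : V) : Prop :=
  t.IsLeaf a ∧ t.IsLeaf b ∧ a ≠ b ∧ qleafRep t {s(a, b)} a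

/-- `e` is a twin link. -/
def IsTwinLinkE (t : Tree V) (e : Sym2 V) : Prop := ∃ a b, e = s(a, b) ∧ TwinPair t a b

/-- `x` is a stem: the least common ancestor of two twins. -/
def IsStem (t : Tree V) (E : Finset (Sym2 V)) (x : V) : Prop :=
  ∃ a b, TwinPair t a b ∧ s(a, b) ∈ E ∧ t.IsLCA x a b

noncomputable def stems (t : Tree V) (E : Finset (Sym2 V)) : Finset V :=
  Finset.univ.filter (IsStem t E)

/-- `X = V \ (L ∪ S)`. -/
noncomputable def Xset (t : Tree V) (E : Finset (Sym2 V)) : Finset V :=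
  Finset.univ.filter (fun x => ¬ t.IsLeaf x ∧ ¬ IsStem t E x)

/-- `s(a,u)` is the up-link of `a` : among all links of `E` at `a`, its other end `u` is
as close as possible to the root (`u` is the up-node of `a`). -/
def IsUpLink (t : Tree V) (E : Finset (Sym2 V)) (a u : V) : Prop :=
  s(a, u) ∈ E ∧ ∀ x, s(a, x) ∈ E → t.depth u ≤ t.depth x

/-- The rooted subtree `T_v` is `a`-closed: it contains the up-node of `a`. -/
def AClosed (t : Tree V) (E : Finset (Sym2 V)) (v a : V) : Prop :=
  ∀ u, IsUpLink t E a u → t.desc v u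

/-- The rooted proper subtree `T_v` witnesses that the leaf `a` is locked by the link `bb'` :
`L(T_v) = {a,b,b'}`, `ab` is a twin link and `T_v` is `a`-closed. -/
def LocksAt (t : Tree V) (E : Finset (Sym2 V)) (b b' a v : V) : Prop :=
  v ≠ t.root ∧ s(b, b') ∈ E ∧ b ≠ b' ∧ b' ≠ a ∧
  {x | t.IsLeaf x ∧ t.desc v x} = {a, b, b'} ∧
  TwinPair t a b ∧ s(a, b) ∈ E ∧ AClosed t E v a

/-- The leaf `a` is locked by the link `bb'`. -/
def Locks (t : Tree V) (E : Finset (Sym2 V)) (b b' a : V) : Prop :=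
  ∃ v, LocksAt t E b b' a v

def IsLockedLeaf (t : Tree V) (E : Finset (Sym2 V)) (a : V) : Prop :=
  ∃ b b', Locks t E b b' a

def IsLockingLink (t : Tree V) (E : Finset (Sym2 V)) (e : Sym2 V) : Prop :=
  ∃ b b' a, e = s(b, b') ∧ Locks t E b b' a

/-- `T_v` is the locking tree of `a` (with locking link `bb'`): the minimal rooted subtree
witnessing the lock. -/
def IsLockingTree (t : Tree V) (E : Finset (Sym2 V)) (a b b' v : V) : Prop :=
  LocksAt t E b b' a v ∧ ∀ v', LocksAt t E b b' a v' → t.desc v' v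

/-! ### The fixed optimal cover `F` -/

noncomputable def twinCount (t : Tree V) (F : Finset (Sym2 V)) : ℕ :=
  (F.filter (fun e => IsTwinLinkE t e)).card

/-- `F` is an optimal (minimum-size) shadows-minimal cover of `T` with the maximum
number of twin links. -/
def IsGoodCover (t : Tree V) (E F : Finset (Sym2 V)) : Prop :=
  F ⊆ E ∧ ShadowsMinimal t F ∧
  (∀ F' : Finset (Sym2 V), F' ⊆ E → IsCover t F' → F.card ≤ F'.card) ∧
  (∀ F' : Finset (Sym2 V), F' ⊆ E → ShadowsMinimal t F' → F'.card = F.card →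
    twinCount t F' ≤ twinCount t F)

/-! ### Auxiliary lemmas for the proof of `twin_links_structure` -/

section Aux

variable (t : Tree V)

lemma covers_mk_iff {u v w : V} : covers t s(u, v) w ↔ t.onPath w u v := by
  constructor
  · rintro ⟨u', v', he, hp⟩
    rcases Sym2.eq_iff.mp he with ⟨rfl, rfl⟩ | ⟨rfl, rfl⟩
    · exact hp
    · exact hp.symm
  · intro hp
    exact ⟨u, v, rfl, hp⟩

lemma not_covers_diag {e : Sym2 V} (hd : e.IsDiag) (w : V) : ¬ covers t e w := by
  rintro ⟨u, v, rfl, hp⟩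
  rw [Sym2.mk_isDiag_iff] at hd
  subst hd
  rcases hp with ⟨h1, h2⟩ | ⟨h1, h2⟩ <;> exact h2 h1

lemma covers_pendant_iff {a : V} (ha : t.IsLeaf a) (e : Sym2 V) :
    covers t e a ↔ a ∈ e ∧ ¬ e.IsDiag := by
  constructor
  · rintro ⟨u, v, rfl, hp⟩
    rcases hp with ⟨h1, h2⟩ | ⟨h1, h2⟩
    · have hu : u = a := t.leaf_desc_eq ha h1
      subst hu
      refine ⟨Sym2.mem_mk_left u v, ?_⟩
      rw [Sym2.mk_isDiag_iff]
      rintro rfl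
      exact h2 h1
    · have hv : v = a := t.leaf_desc_eq ha h1
      subst hv
      refine ⟨Sym2.mem_mk_right u v, ?_⟩
      rw [Sym2.mk_isDiag_iff]
      rintro rfl
      exact h2 h1
  · rintro ⟨hm, hd⟩
    obtain ⟨y, rfl⟩ := Sym2.mem_iff_exists.mp hm
    rw [Sym2.mk_isDiag_iff] at hd
    rw [covers_mk_iff]
    exact Or.inl ⟨t.desc_refl a, fun h => hd (t.leaf_desc_eq ha h).symm⟩

lemma isCover_insert_erase {F : Finset (Sym2 V)} {e e' : Sym2 V} (hc : IsCover t F)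
    (he' : ∀ w, w ≠ t.root → covers t e w → coveredBy t (insert e' (F.erase e)) w) :
    IsCover t (insert e' (F.erase e)) := by
  intro w hw
  obtain ⟨g, hg, hcg⟩ := hc w hw
  by_cases hge : g = e
  · exact he' w hw (hge ▸ hcg)
  · exact ⟨g, Finset.mem_insert_of_mem (Finset.mem_erase.mpr ⟨hge, hg⟩), hcg⟩

lemma isCover_of_diag {S : Finset (Sym2 V)} {e' : Sym2 V} (h : IsCover t (insert e' S))
    (hd : e'.IsDiag) : IsCover t S := by
  intro w hw
  obtain ⟨g, hg, hcg⟩ := h w hw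
  rcases Finset.mem_insert.mp hg with rfl | hg'
  · exact absurd hcg (not_covers_diag t hd w)
  · exact ⟨g, hg', hcg⟩

lemma properShadow_ne {e e' : Sym2 V} (h : ProperShadow t e' e) : e' ≠ e := by
  rintro rfl
  obtain ⟨_, w, hw, hnw⟩ := h
  exact hnw hw

/-! Shadow lemmas -/

lemma shadow_parent {u z : V} (h : ¬ t.desc u z) :
    Shadow t s(t.parent u, z) s(u, z) := by
  intro w hw
  rw [covers_mk_iff] at hw ⊢
  rcases hw with ⟨h1, h2⟩ | ⟨h1, h2⟩
  · exact Or.inl ⟨t.desc_trans (t.desc_parent u) h1, h2⟩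
  · refine Or.inr ⟨h1, fun hc => ?_⟩
    by_cases hwu : w = u
    · subst hwu; exact h h1
    · exact h2 (t.desc_parent_of_ne hc hwu)

lemma shadow_anc {s u z : V} (hs : t.desc s u) (hz : ¬ t.desc s z) :
    Shadow t s(s, z) s(u, z) := by
  intro w hw
  rw [covers_mk_iff] at hw ⊢
  rcases hw with ⟨h1, h2⟩ | ⟨h1, h2⟩
  · exact Or.inl ⟨t.desc_trans hs h1, h2⟩
  · refine Or.inr ⟨h1, fun hc => ?_⟩
    rcases t.desc_total hc hs with hws | hsw
    · exact h2 hws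
    · exact hz (t.desc_trans h1 hsw)

lemma onPath_decomp {s u z w : V} (hs : t.desc s u) (hz : ¬ t.desc s z)
    (h : t.onPath w u z) :
    t.onPath w s z ∨ (t.desc s w ∧ t.desc w u ∧ w ≠ s) := by
  rcases h with ⟨h1, h2⟩ | ⟨h1, h2⟩
  · rcases t.desc_total h1 hs with hws | hsw
    · exact Or.inl (Or.inl ⟨hws, h2⟩)
    · by_cases hwe : w = s
      · subst hwe; exact Or.inl (Or.inl ⟨t.desc_refl w, h2⟩)
      · exact Or.inr ⟨hsw, h1, hwe⟩
  · exact Or.inl (Or.inr ⟨h1, fun hws => h2 (t.desc_trans hs hws)⟩)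

lemma onPath_parent_decomp {s z w : V} (hz : ¬ t.desc s z) (h : t.onPath w s z) :
    t.onPath w (t.parent s) z ∨ w = s := by
  rcases h with ⟨h1, h2⟩ | ⟨h1, h2⟩
  · by_cases hwe : w = s
    · exact Or.inr hwe
    · exact Or.inl (Or.inl ⟨t.desc_parent_of_ne h1 hwe, h2⟩)
  · exact Or.inl (Or.inr ⟨h1, fun hp => h2 (t.desc_trans (t.desc_parent s) hp)⟩)

lemma onPath_inside {s u z w : V} (hu : t.desc s u) (hz : t.desc s z)
    (h : t.onPath w u z) : t.desc s w ∧ w ≠ s := by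
  rcases h with ⟨h1, h2⟩ | ⟨h1, h2⟩
  · rcases t.desc_total h1 hu with hws | hsw
    · exact absurd (t.desc_trans hz hws) h2
    · refine ⟨hsw, ?_⟩
      rintro rfl
      exact h2 hz
  · rcases t.desc_total h1 hz with hws | hsw
    · exact absurd (t.desc_trans hu hws) h2
    · refine ⟨hsw, ?_⟩
      rintro rfl
      exact h2 hu

lemma onPath_leaf_parent {c x w : V} (hc : t.IsLeaf c) (h : t.onPath w c x)
    (hw : w ≠ c) : t.onPath w (t.parent c) x := by
  rcases h with ⟨h1, h2⟩ | ⟨h1, h2⟩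
  · exact Or.inl ⟨t.desc_parent_of_ne h1 hw, h2⟩
  · exact Or.inr ⟨h1, fun hp => h2 (t.desc_trans (t.desc_parent c) hp)⟩

/-! Twin pair lemmas -/

lemma coveredBy_singleton_iff {e : Sym2 V} {w : V} :
    coveredBy t {e} w ↔ covers t e w := by
  constructor
  · rintro ⟨f, hf, hcf⟩
    rw [Finset.mem_singleton] at hf
    exact hf ▸ hcf
  · intro h
    exact ⟨e, Finset.mem_singleton_self e, h⟩

lemma rel_ab {a b : V} : rel t {s(a, b)} a b := by
  intro w _ hp
  exact (coveredBy_singleton_iff t).mpr ((covers_mk_iff t).mpr hp)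

lemma twinPair_symm {a b : V} (h : TwinPair t a b) : TwinPair t b a := by
  obtain ⟨ha, hb, hne, hq⟩ := h
  have hsw : ({s(b, a)} : Finset (Sym2 V)) = {s(a, b)} := by rw [Sym2.eq_swap]
  have hrel : rel t {s(a, b)} a b := rel_ab t
  have R := (relSetoid t {s(a, b)}).iseqv
  refine ⟨hb, ha, hne.symm, ?_, ?_⟩
  · rw [hsw]
    intro hroot
    exact hq.1 (R.trans hrel hroot)
  · rw [hsw]
    intro v hv
    exact R.trans (hq.2 v (R.trans hv (R.symm hrel))) hrel

lemma twinPair_of_twinLink {c y : V} (h : IsTwinLinkE t s(c, y)) : TwinPair t c y := by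
  obtain ⟨a', b', he, hw⟩ := h
  rcases Sym2.eq_iff.mp he with ⟨rfl, rfl⟩ | ⟨rfl, rfl⟩
  · exact hw
  · exact twinPair_symm t hw

lemma twin_link_ends_leaf {e : Sym2 V} (h : IsTwinLinkE t e) {x : V} (hx : x ∈ e) :
    t.IsLeaf x := by
  obtain ⟨a', b', rfl, hw⟩ := h
  rcases Sym2.mem_iff.mp hx with rfl | rfl
  · exact hw.1
  · exact hw.2.1

lemma isLCA_symm {s a b : V} (h : t.IsLCA s a b) : t.IsLCA s b a :=
  ⟨h.2.1, h.1, fun w h1 h2 => h.2.2 w h2 h1⟩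

lemma stem_ne_root {a b st : V} (hab : TwinPair t a b) (hst : t.IsLCA st a b) :
    st ≠ t.root := by
  rintro rfl
  apply hab.2.2.2.1
  intro w hw hp
  rcases hp with ⟨h1, h2⟩ | ⟨h1, h2⟩
  · refine (coveredBy_singleton_iff t).mpr ((covers_mk_iff t).mpr (Or.inl ⟨h1, fun hb => ?_⟩))
    exact hw (t.eq_root_of_desc_root (hst.2.2 w h1 hb))
  · exact absurd (t.eq_root_of_desc_root h1) hw

lemma rel_to_a {a b st p : V} (hst : t.IsLCA st a b) (hsp : t.desc st p)
    (hpa : t.desc p a) : rel t {s(a, b)} p a := by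
  intro w hw hp
  rcases hp with ⟨h1, h2⟩ | ⟨h1, h2⟩
  · exact absurd (t.desc_trans hpa h1) h2
  · refine (coveredBy_singleton_iff t).mpr ((covers_mk_iff t).mpr (Or.inl ⟨h1, fun hb => ?_⟩))
    have hwst : t.desc w st := hst.2.2 w h1 hb
    rcases t.desc_total h1 hpa with hwp | hpw
    · exact h2 hwp
    · have hps : t.desc p st := t.desc_trans hwst hpw
      have hpe : p = st := t.desc_antisymm hps hsp
      subst hpe
      exact h2 hwst

lemma twin_subtree {a b st : V} (hab : TwinPair t a b) (hst : t.IsLCA st a b) :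
    ∀ x, t.desc st x → t.desc x a ∨ t.desc x b := by
  suffices h : ∀ n x, t.parent^[n] x = st → t.desc x a ∨ t.desc x b by
    rintro x ⟨n, hn⟩
    exact h n x hn
  intro n
  induction n with
  | zero =>
    intro x hx
    subst hx
    exact Or.inl hst.1
  | succ n ih =>
    intro x hx
    by_cases hxs : x = st
    · subst hxs; exact Or.inl hst.1
    rw [Function.iterate_succ_apply] at hx
    have hdp := ih (t.parent x) hx
    have R := (relSetoid t {s(a, b)}).iseqv
    have hsp : t.desc st (t.parent x) := ⟨n, hx⟩
    have hrel : rel t {s(a, b)} (t.parent x) a := by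
      rcases hdp with h | h
      · exact rel_to_a t hst hsp h
      · have hb : rel t {s(a, b)} (t.parent x) b := by
          have hsw : (s(b, a) : Sym2 V) = s(a, b) := Sym2.eq_swap
          have h2 := rel_to_a t (isLCA_symm t hst) hsp h
          have hss : ({s(b, a)} : Finset (Sym2 V)) = {s(a, b)} := by rw [hsw]
          rwa [hss] at h2
        exact R.trans hb (R.symm (rel_ab t))
    have hx' : rel t {s(a, b)} x a := hab.2.2.2.2 x hrel
    by_contra hcon
    push_neg at hcon
    have hxr : x ≠ t.root := by
      rintro rfl
      exact stem_ne_root t hab hst (t.eq_root_of_desc_root ⟨n + 1, by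
        rw [Function.iterate_succ_apply]; exact hx⟩)
    have := hx' x hxr (Or.inl ⟨t.desc_refl x, hcon.1⟩)
    rw [coveredBy_singleton_iff, covers_mk_iff] at this
    rcases this with ⟨h1, _⟩ | ⟨h1, _⟩
    · exact hcon.1 h1
    · exact hcon.2 h1

lemma leaf_in_stem_subtree {a b st x : V} (hab : TwinPair t a b) (hst : t.IsLCA st a b)
    (hx : t.desc st x) (hlx : t.IsLeaf x) : x = a ∨ x = b := by
  rcases twin_subtree t hab hst x hx with h | h
  · exact Or.inl (t.leaf_desc_eq hlx h).symm
  · exact Or.inr (t.leaf_desc_eq hlx h).symm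

lemma twin_unique {c d y : V} (h1 : TwinPair t c d) (h2 : TwinPair t c y) : y = d := by
  by_contra hne
  obtain ⟨s1, hs1⟩ := t.exists_isLCA c d
  obtain ⟨s2, hs2⟩ := t.exists_isLCA c y
  rcases t.desc_total hs1.1 hs2.1 with h | h
  · have hy : t.desc s1 y := t.desc_trans hs2.2.1 h
    rcases leaf_in_stem_subtree t h1 hs1 hy h2.2.1 with rfl | rfl
    · exact h2.2.2.1 rfl
    · exact hne rfl
  · have hd : t.desc s2 d := t.desc_trans hs1.2.1 h
    rcases leaf_in_stem_subtree t h2 hs2 hd h1.2.1 with rfl | rfl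
    · exact h1.2.2.1 rfl
    · exact hne rfl

lemma shadow_sub_twin {a b st x : V} (hab : TwinPair t a b) (hst : t.IsLCA st a b)
    (hx : t.desc st x) : Shadow t s(a, x) s(a, b) := by
  intro w hw
  rw [covers_mk_iff] at hw ⊢
  rcases twin_subtree t hab hst x hx with hxa | hxb
  · rcases hw with ⟨h1, h2⟩ | ⟨h1, h2⟩
    · exact Or.inl ⟨h1, fun hb => h2 (t.desc_trans hx (hst.2.2 w h1 hb))⟩
    · exact absurd (t.desc_trans hxa h1) h2
  · rcases hw with ⟨h1, h2⟩ | ⟨h1, h2⟩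
    · exact Or.inl ⟨h1, fun hb => h2 (t.desc_trans hx (hst.2.2 w h1 hb))⟩
    · exact Or.inr ⟨t.desc_trans hxb h1, h2⟩

/-! Unique link at a leaf in a shadows-minimal cover -/

lemma leaf_link_unique {F : Finset (Sym2 V)} (hndF : ∀ e ∈ F, ¬ e.IsDiag)
    (hsm : ShadowsMinimal t F) {c : V} (hc : t.IsLeaf c) :
    ∃ x, s(c, x) ∈ F ∧ ∀ f ∈ F, c ∈ f → f = s(c, x) := by
  obtain ⟨f1, hf1, hcf1⟩ := hsm.1 c hc.1
  have hm1 : c ∈ f1 := ((covers_pendant_iff t hc f1).mp hcf1).1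
  obtain ⟨x, rfl⟩ := Sym2.mem_iff_exists.mp hm1
  refine ⟨x, hf1, ?_⟩
  intro f2 hf2 hcf2
  by_contra hne
  obtain ⟨x2, rfl⟩ := Sym2.mem_iff_exists.mp hcf2
  have hx2c : x2 ≠ c := fun h => (hndF _ hf2) (by rw [Sym2.mk_isDiag_iff, h])
  have hndesc : ¬ t.desc c x2 := fun h => hx2c (t.leaf_desc_eq hc h)
  refine hsm.2.2 _ hf2 s(t.parent c, x2) ⟨shadow_parent t hndesc, c, ?_, ?_⟩ ?_
  · exact (covers_pendant_iff t hc _).mpr ⟨Sym2.mem_mk_left c x2, hndF _ hf2⟩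
  · intro hcc
    rcases Sym2.mem_iff.mp ((covers_pendant_iff t hc _).mp hcc).1 with h | h
    · exact t.parent_ne_self hc.1 h.symm
    · exact hx2c h.symm
  · refine isCover_insert_erase t hsm.1 ?_
    intro w hw hcw
    rw [covers_mk_iff] at hcw
    by_cases hwc : w = c
    · subst hwc
      refine ⟨s(w, x), Finset.mem_insert_of_mem (Finset.mem_erase.mpr ⟨Ne.symm hne, hf1⟩), ?_⟩
      exact (covers_pendant_iff t hc _).mpr ⟨Sym2.mem_mk_left w x, hndF _ hf1⟩
    · exact ⟨s(t.parent c, x2), Finset.mem_insert_self _ _,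
        (covers_mk_iff t).mpr (onPath_leaf_parent t hc hcw hwc)⟩

/-! The μ-descent: from any optimal-size cover with many twin links, produce a
shadows-minimal one with as many twin links. -/

noncomputable def covSize (t : Tree V) (e : Sym2 V) : ℕ :=
  (Finset.univ.filter (fun w => covers t e w)).card

noncomputable def mu (t : Tree V) (G : Finset (Sym2 V)) : ℕ := ∑ e ∈ G, covSize t e

lemma covSize_lt {e e' : Sym2 V} (h : ProperShadow t e' e) :
    covSize t e' < covSize t e := by
  apply Finset.card_lt_card
  rw [Finset.ssubset_iff_of_subset]
  · obtain ⟨w, hw, hnw⟩ := h.2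
    exact ⟨w, by simpa using hw, by simpa using hnw⟩
  · intro w hw
    simp only [Finset.mem_filter, Finset.mem_univ, true_and] at hw ⊢
    exact h.1 w hw

lemma mu_lt {G : Finset (Sym2 V)} {e e' : Sym2 V} (he : e ∈ G) (hne : e' ∉ G)
    (hlt : covSize t e' < covSize t e) : mu t (insert e' (G.erase e)) < mu t G := by
  unfold mu
  rw [Finset.sum_insert (fun h => hne (Finset.mem_of_mem_erase h))]
  rw [← Finset.add_sum_erase G (covSize t) he]
  omega

lemma twinCount_insert_not {G : Finset (Sym2 V)} {e : Sym2 V} (h : ¬ IsTwinLinkE t e) :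
    twinCount t (insert e G) = twinCount t G := by
  unfold twinCount
  rw [Finset.filter_insert, if_neg h]

lemma twinCount_erase_not {G : Finset (Sym2 V)} {e : Sym2 V} (h : ¬ IsTwinLinkE t e) :
    twinCount t (G.erase e) = twinCount t G := by
  unfold twinCount
  rw [Finset.filter_erase, Finset.erase_eq_of_notMem (by simp [h])]

lemma exists_shadowsMinimal_twinRich (E : Finset (Sym2 V)) {F₀ : Finset (Sym2 V)}
    (hndE : ∀ e ∈ E, ¬ e.IsDiag) (hsh : ShadowClosed t E)
    (hopt : ∀ G, G ⊆ E → IsCover t G → F₀.card ≤ G.card)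
    (n : ℕ) (G₀ : Finset (Sym2 V)) (hG₀E : G₀ ⊆ E) (hG₀c : IsCover t G₀)
    (hG₀card : G₀.card = F₀.card) (hG₀tw : n < twinCount t G₀) :
    ∃ G, G ⊆ E ∧ ShadowsMinimal t G ∧ G.card = F₀.card ∧ n < twinCount t G := by
  classical
  set S : Finset (Finset (Sym2 V)) := Finset.univ.filter
    (fun G => G ⊆ E ∧ IsCover t G ∧ G.card = F₀.card ∧ n < twinCount t G) with hSdef
  have hmemS : ∀ G, G ∈ S ↔ G ⊆ E ∧ IsCover t G ∧ G.card = F₀.card ∧ n < twinCount t G := by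
    intro G; simp [hSdef]
  have hne : S.Nonempty := ⟨G₀, (hmemS G₀).mpr ⟨hG₀E, hG₀c, hG₀card, hG₀tw⟩⟩
  obtain ⟨G, hGS, hGmin⟩ := S.exists_min_image (mu t) hne
  obtain ⟨hGE, hGc, hGcard, hGtw⟩ := (hmemS G).mp hGS
  -- basic: erasing a link never covers
  have herase : ∀ g ∈ G, ¬ IsCover t (G.erase g) := by
    intro g hg hcov
    have h1 := hopt _ ((Finset.erase_subset g G).trans hGE) hcov
    have h2 : (G.erase g).card = G.card - 1 := Finset.card_erase_of_mem hg
    have h3 : 0 < G.card := Finset.card_pos.mpr ⟨g, hg⟩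
    omega
  refine ⟨G, hGE, ⟨hGc, herase, ?_⟩, hGcard, hGtw⟩
  intro e he e' hps hcov
  by_cases hd : e'.IsDiag
  · exact herase e he (isCover_of_diag t hcov hd)
  by_cases hmem : e' ∈ G.erase e
  · rw [Finset.insert_eq_self.mpr hmem] at hcov
    exact herase e he hcov
  have he'E : e' ∈ E := hsh e (hGE he) e' hd hps.1
  have hne' : e' ∉ G := fun h => hmem (Finset.mem_erase.mpr ⟨properShadow_ne t hps, h⟩)
  have hcard₂ : (insert e' (G.erase e)).card = F₀.card := by
    rw [Finset.card_insert_of_notMem hmem, Finset.card_erase_of_mem he]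
    have : 0 < G.card := Finset.card_pos.mpr ⟨e, he⟩
    omega
  have hmu₂ : mu t (insert e' (G.erase e)) < mu t G := mu_lt t he hne' (covSize_lt t hps)
  have hsubE : insert e' (G.erase e) ⊆ E :=
    Finset.insert_subset he'E ((Finset.erase_subset e G).trans hGE)
  by_cases hte : IsTwinLinkE t e
  case neg =>
    -- twin links are preserved
    have htc : twinCount t G ≤ twinCount t (insert e' (G.erase e)) := by
      apply Finset.card_le_card
      intro f hf
      rw [Finset.mem_filter] at hf ⊢
      refine ⟨Finset.mem_insert_of_mem (Finset.mem_erase.mpr ⟨?_, hf.1⟩), hf.2⟩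
      rintro rfl
      exact hte hf.2
    have : insert e' (G.erase e) ∈ S :=
      (hmemS _).mpr ⟨hsubE, hcov, hcard₂, lt_of_lt_of_le hGtw htc⟩
    exact absurd (hGmin _ this) (not_le.mpr hmu₂)
  case pos =>
    obtain ⟨a₁, b₁, heq, htp⟩ := hte
    -- the patch: if some other link of G touches an end of the twin link e,
    -- we can shorten that link instead, keeping the twin count.
    have patch : ∀ c d g, TwinPair t c d → s(c, d) = e → g ∈ G.erase e → c ∈ g → False := by
      intro c d g htpcd heqcd hge hcg
      obtain ⟨hgne, hgG⟩ := Finset.mem_erase.mp hge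
      obtain ⟨y, rfl⟩ := Sym2.mem_iff_exists.mp hcg
      have hyc : y ≠ c := fun h => (hndE _ (hGE hgG)) (by rw [Sym2.mk_isDiag_iff, h])
      have hyd : y ≠ d := by
        rintro rfl
        exact hgne heqcd
      have hcle : t.IsLeaf c := htpcd.1
      have hcd : c ≠ d := htpcd.2.2.1
      have hndesc : ¬ t.desc c y := fun h => hyc (t.leaf_desc_eq hcle h)
      -- the (possibly degenerate) replacement cover
      have hcover₃ : IsCover t (insert s(t.parent c, y) (G.erase s(c, y))) := by
        refine isCover_insert_erase t hGc ?_
        intro w hw hcw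
        rw [covers_mk_iff] at hcw
        by_cases hwc : w = c
        · subst hwc
          refine ⟨s(w, d), Finset.mem_insert_of_mem
            (Finset.mem_erase.mpr ⟨fun h => hgne (h ▸ heqcd), heqcd ▸ he⟩), ?_⟩
          refine (covers_pendant_iff t hcle _).mpr ⟨Sym2.mem_mk_left w d, ?_⟩
          rw [Sym2.mk_isDiag_iff]
          exact hcd
        · exact ⟨s(t.parent c, y), Finset.mem_insert_self _ _,
            (covers_mk_iff t).mpr (onPath_leaf_parent t hcle hcw hwc)⟩
      by_cases hdg : (s(t.parent c, y)).IsDiag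
      · exact herase _ hgG (isCover_of_diag t hcover₃ hdg)
      by_cases hg'mem : s(t.parent c, y) ∈ G.erase s(c, y)
      · rw [Finset.insert_eq_self.mpr hg'mem] at hcover₃
        exact herase _ hgG hcover₃
      -- the interesting case
      have hshadow : Shadow t s(t.parent c, y) s(c, y) := shadow_parent t hndesc
      have hproper : ProperShadow t s(t.parent c, y) s(c, y) := by
        refine ⟨hshadow, c, ?_, ?_⟩
        · exact (covers_pendant_iff t hcle _).mpr
            ⟨Sym2.mem_mk_left c y, by rw [Sym2.mk_isDiag_iff]; exact fun h => hyc h.symm⟩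
        · intro hcc
          rcases Sym2.mem_iff.mp ((covers_pendant_iff t hcle _).mp hcc).1 with h | h
          · exact t.parent_ne_self hcle.1 h.symm
          · exact hyc h.symm
      have hg'E : s(t.parent c, y) ∈ E := hsh _ (hGE hgG) _ hdg hshadow
      have hg'G : s(t.parent c, y) ∉ G := fun h =>
        hg'mem (Finset.mem_erase.mpr ⟨properShadow_ne t hproper, h⟩)
      have hntw_g : ¬ IsTwinLinkE t s(c, y) := by
        intro h
        exact hyd (twin_unique t htpcd (twinPair_of_twinLink t h))
      have hntw_g' : ¬ IsTwinLinkE t s(t.parent c, y) := by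
        intro h
        exact t.not_leaf_parent hcle (twin_link_ends_leaf t h (Sym2.mem_mk_left _ _))
      have hcard₃ : (insert s(t.parent c, y) (G.erase s(c, y))).card = F₀.card := by
        rw [Finset.card_insert_of_notMem hg'mem, Finset.card_erase_of_mem hgG]
        have : 0 < G.card := Finset.card_pos.mpr ⟨_, hgG⟩
        omega
      have htw₃ : twinCount t (insert s(t.parent c, y) (G.erase s(c, y))) = twinCount t G := by
        rw [twinCount_insert_not t hntw_g', twinCount_erase_not t hntw_g]
      have hmem₃ : insert s(t.parent c, y) (G.erase s(c, y)) ∈ S := by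
        refine (hmemS _).mpr ⟨Finset.insert_subset hg'E
          ((Finset.erase_subset _ G).trans hGE), hcover₃, hcard₃, ?_⟩
        rw [htw₃]; exact hGtw
      have := hGmin _ hmem₃
      have hmu₃ : mu t (insert s(t.parent c, y) (G.erase s(c, y))) < mu t G :=
        mu_lt t hgG hg'G (covSize_lt t hproper)
      omega
    -- pendant edges of the twins of e must be covered in the replacement cover
    have ha₁leaf := htp.1
    have hb₁leaf := htp.2.1
    obtain ⟨fa, hfa, hca⟩ := hcov a₁ ha₁leaf.1
    obtain ⟨fb, hfb, hcb⟩ := hcov b₁ hb₁leaf.1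
    have ha_mem : a₁ ∈ fa := ((covers_pendant_iff t ha₁leaf fa).mp hca).1
    have hb_mem : b₁ ∈ fb := ((covers_pendant_iff t hb₁leaf fb).mp hcb).1
    rcases Finset.mem_insert.mp hfa with hfae | hfa'
    · rcases Finset.mem_insert.mp hfb with hfbe | hfb'
      · -- both pendant edges covered by e' : then e' = e, impossible
        have hboth : fa = s(a₁, b₁) :=
          (Sym2.mem_and_mem_iff htp.2.2.1).mp ⟨ha_mem, (hfbe.trans hfae.symm) ▸ hb_mem⟩
        exact properShadow_ne t hps ((hfae.symm.trans hboth).trans heq.symm)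
      · exact patch b₁ a₁ fb (twinPair_symm t htp) (Sym2.eq_swap.trans heq.symm) hfb' hb_mem
    · exact patch a₁ b₁ fa htp heq.symm hfa' ha_mem

lemma no_inner_link (E F : Finset (Sym2 V)) (hnd : ∀ e ∈ E, ¬ e.IsDiag)
    (hsh : ShadowClosed t E) (hF : IsGoodCover t E F) {a b st x : V}
    (hab : TwinPair t a b) (habE : s(a, b) ∈ E) (hst : t.IsLCA st a b)
    (habF : s(a, b) ∉ F) (hxF : s(a, x) ∈ F) : ¬ t.desc st x := by
  intro hxT
  obtain ⟨hFE, hsm, hopt, hmax⟩ := hF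
  have hxb : x ≠ b := by
    rintro rfl
    exact habF hxF
  have hcov₂ : IsCover t (insert s(a, b) (F.erase s(a, x))) := by
    refine isCover_insert_erase t hsm.1 ?_
    intro w hw hcw
    exact ⟨s(a, b), Finset.mem_insert_self _ _, shadow_sub_twin t hab hst hxT w hcw⟩
  have habF' : s(a, b) ∉ F.erase s(a, x) := fun h => habF (Finset.mem_of_mem_erase h)
  have hcard : (insert s(a, b) (F.erase s(a, x))).card = F.card := by
    rw [Finset.card_insert_of_notMem habF', Finset.card_erase_of_mem hxF]
    have : 0 < F.card := Finset.card_pos.mpr ⟨_, hxF⟩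
    omega
  have hsubE : insert s(a, b) (F.erase s(a, x)) ⊆ E :=
    Finset.insert_subset habE ((Finset.erase_subset _ F).trans hFE)
  have htwab : IsTwinLinkE t s(a, b) := ⟨a, b, rfl, hab⟩
  have hntw : ¬ IsTwinLinkE t s(a, x) := by
    intro h
    exact hxb (twin_unique t hab (twinPair_of_twinLink t h))
  have htw₂ : twinCount t F < twinCount t (insert s(a, b) (F.erase s(a, x))) := by
    unfold twinCount
    rw [Finset.filter_insert, if_pos htwab, Finset.filter_erase,
      Finset.erase_eq_of_notMem (by simp [hntw]),
      Finset.card_insert_of_notMem (fun h => habF (Finset.mem_filter.mp h).1)]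
    omega
  obtain ⟨G, hGE, hGsm, hGcard, hGtw⟩ := exists_shadowsMinimal_twinRich t E hnd hsh hopt
    (twinCount t F) _ hsubE hcov₂ hcard htw₂
  exact absurd (hmax G hGE hGsm hGcard) (not_le.mpr hGtw)

end Aux


/-! ### Matchings and the lower bound -/

def IsMatching (M : Finset (Sym2 V)) : Prop :=
  (∀ e ∈ M, ¬ e.IsDiag) ∧ ∀ e ∈ M, ∀ f ∈ M, e ≠ f → ∀ x, x ∈ e → x ∉ f

/-- `E(L,L)` : the links of `E` joining two leaves. -/
noncomputable def leafLinks (t : Tree V) (E : Finset (Sym2 V)) : Finset (Sym2 V) :=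
  E.filter (fun e => ∀ x ∈ e, t.IsLeaf x)

/-- `W` : the set of twin links and locking links. -/
noncomputable def Wlinks (t : Tree V) (E : Finset (Sym2 V)) : Finset (Sym2 V) :=
  E.filter (fun e => IsTwinLinkE t e ∨ IsLockingLink t E e)

/-- `M` is a maximum matching in `E(L,L) \ W`. -/
def IsMaxLeafMatching (t : Tree V) (E M : Finset (Sym2 V)) : Prop :=
  M ⊆ leafLinks t E \ Wlinks t E ∧ IsMatching M ∧
  ∀ M' : Finset (Sym2 V), M' ⊆ leafLinks t E \ Wlinks t E → IsMatching M' → M'.card ≤ M.card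

/-- `U` : the set of leaves unmatched by `M`. -/
noncomputable def unmatchedLeaves (t : Tree V) (M : Finset (Sym2 V)) : Finset V :=
  Finset.univ.filter (fun a => t.IsLeaf a ∧ ∀ e ∈ M, a ∉ e)

/-- `M_F = F(L,L) \ W`. -/
noncomputable def MFlinks (t : Tree V) (E F : Finset (Sym2 V)) : Finset (Sym2 V) :=
  (F.filter (fun e => ∀ x ∈ e, t.IsLeaf x)) \ Wlinks t E

/-- `N = {bb' ∈ M : each of b, b' is unmatched by M_F}`. -/
noncomputable def Nlinks (t : Tree V) (E F M : Finset (Sym2 V)) : Finset (Sym2 V) :=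
  M.filter (fun e => ∀ b ∈ e, ∀ f ∈ MFlinks t E F, b ∉ f)

/-- `J` : the set of links of `F` not incident to a locked leaf. -/
noncomputable def Jlinks (t : Tree V) (E F : Finset (Sym2 V)) : Finset (Sym2 V) :=
  F.filter (fun e => ∀ x ∈ e, ¬ IsLockedLeaf t E x)

/-- The lower bound `(3/2)|M| + |U| + (1/2)|N| + (1/2) Σ_{x ∈ X} d_J(x)`. -/
noncomputable def LB (t : Tree V) (E F M : Finset (Sym2 V)) : ℚ :=
  (3 / 2 : ℚ) * (M.card : ℚ) + ((unmatchedLeaves t M).card : ℚ)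
    + (1 / 2 : ℚ) * ((Nlinks t E F M).card : ℚ)
    + (1 / 2 : ℚ) * ∑ x ∈ Xset t E, (deg (Jlinks t E F) x : ℚ)

/-! ### Subtrees of `T/I`, semi-closed trees, credits -/

/-- `T'` (the rooted subtree of `T/I` with root `c`) is `M`-compatible. -/
def MCompatible (t : Tree V) (I M : Finset (Sym2 V)) (c : QT t I) : Prop :=
  ∀ e ∈ M, (∀ x ∈ e, inT t I c x) ∨ (∀ x ∈ e, ¬ inT t I c x)

/-- `T'` is semi-closed (w.r.t. `M`): `M`-compatible and closed w.r.t. its unmatched leaves. -/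
def SemiClosedQ (t : Tree V) (I E M : Finset (Sym2 V)) (c : QT t I) : Prop :=
  MCompatible t I M c ∧
  ∀ x y, s(x, y) ∈ E → inT t I c x → qleafRep t I x → ¬ matchedRep t I M x → inT t I c y

/-- `T'` is minimally semi-closed. -/
def MinSemiClosedQ (t : Tree V) (I E M : Finset (Sym2 V)) (c : QT t I) : Prop :=
  SemiClosedQ t I E M c ∧
  ∀ c' : QT t I, below t I c c' → c' ≠ c → ¬ SemiClosedQ t I E M c'

/-- `I'` is an exact cover of `T'` : the set of edges of `T/I` covered by `I'` is exactly
the edge set of `T'`. -/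
def IsExactCoverQ (t : Tree V) (I : Finset (Sym2 V)) (c : QT t I) (I' : Finset (Sym2 V)) : Prop :=
  ∀ w, w ≠ t.root → ¬ coveredBy t I w → (coveredBy t I' w ↔ inT t I c (t.parent w))

/-- `up(U')` : the set of up-links of the unmatched leaves of `T'`. -/
noncomputable def upOfQ (t : Tree V) (I E M : Finset (Sym2 V)) (c : QT t I) :
    Finset (Sym2 V) :=
  E.filter (fun e => ∃ a u, e = s(a, u) ∧ inT t I c a ∧ qleafRep t I a ∧
    ¬ matchedRep t I M a ∧ qUpNode t I E a u)

/-- `M` is a matching on the leaves of `T/I`. -/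
def IsLeafMatchingQ (t : Tree V) (I M : Finset (Sym2 V)) : Prop :=
  (∀ e ∈ M, ∃ a b, e = s(a, b) ∧ qleafRep t I a ∧ qleafRep t I b ∧ ¬ rel t I a b) ∧
  ∀ e ∈ M, ∀ f ∈ M, e ≠ f → ∀ x, x ∈ e → ∀ y, y ∈ f → ¬ rel t I x y

/-- `L' = L(T')` as a set of nodes of `T/I`. -/
noncomputable def LsetQ (t : Tree V) (I : Finset (Sym2 V)) (c : QT t I) : Finset (QT t I) :=
  Finset.univ.filter (fun d => below t I c d ∧ qleafRep t I d.out)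

/-- `U'` : the `M`-unmatched leaves of `T'`. -/
noncomputable def UsetQ (t : Tree V) (I M : Finset (Sym2 V)) (c : QT t I) : Finset (QT t I) :=
  Finset.univ.filter
    (fun d => below t I c d ∧ qleafRep t I d.out ∧ ¬ matchedRep t I M d.out)

/-- `C'` : the non-leaf compound nodes of `T'`. -/
noncomputable def CsetQ (t : Tree V) (I : Finset (Sym2 V)) (c : QT t I) : Finset (QT t I) :=
  Finset.univ.filter
    (fun d => below t I c d ∧ qcompoundRep t I d.out ∧ ¬ qleafRep t I d.out)

/-- `M' = M(T')` : the links of `M` with both ends in `T'`. -/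
noncomputable def MlinksQ (t : Tree V) (I M : Finset (Sym2 V)) (c : QT t I) :
    Finset (Sym2 V) :=
  M.filter (fun e => ∀ x ∈ e, inT t I c x)

/-- `S'` : the stems of `T'`. -/
noncomputable def SsetQ (t : Tree V) (I E : Finset (Sym2 V)) (c : QT t I) : Finset (QT t I) :=
  Finset.univ.filter (fun d => below t I c d ∧ qStem t I E d.out)

/-- `S'_1` : the stems of `T'` whose twin link lies in `F`. -/
noncomputable def S1setQ (t : Tree V) (I E F : Finset (Sym2 V)) (c : QT t I) :
    Finset (QT t I) :=
  Finset.univ.filter (fun d => below t I c d ∧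
    ∃ a b, qTwinAt t I E a b ∧ s(a, b) ∈ F ∧ qIsLCA t I d.out a b)

/-- `X'` : the original nodes of `T'` lying in `X`. -/
noncomputable def XsetQ (t : Tree V) (I E : Finset (Sym2 V)) (c : QT t I) : Finset (QT t I) :=
  Finset.univ.filter
    (fun d => below t I c d ∧ ¬ qcompoundRep t I d.out ∧ d.out ∈ Xset t E)

/-- `tickets(T') = |N(T')| + Σ_{x ∈ X'} d_J(x)`. -/
noncomputable def ticketsQ (t : Tree V) (I E F M : Finset (Sym2 V)) (c : QT t I) : ℕ :=
  ((Nlinks t E F M).filter (fun e => ∀ x ∈ e, inT t I c x)).card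
    + ∑ d ∈ XsetQ t I E c, deg (Jlinks t E F) d.out

/-- `coupons(T')` : one coupon for each unmatched leaf and each compound node of `T'`,
and `3/2` coupons for each link of `M(T')`. -/
noncomputable def couponsQ (t : Tree V) (I M : Finset (Sym2 V)) (c : QT t I) : ℚ :=
  ((Finset.univ.filter (fun d : QT t I => below t I c d ∧
      ((qleafRep t I d.out ∧ ¬ matchedRep t I M d.out) ∨ qcompoundRep t I d.out))).card : ℚ)
    + (3 / 2 : ℚ) * ((MlinksQ t I M c).card : ℚ)

/-- `credit(T') = coupons(T') + tickets(T')/2`. -/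
noncomputable def creditQ (t : Tree V) (I E F M : Finset (Sym2 V)) (c : QT t I) : ℚ :=
  couponsQ t I M c + (ticketsQ t I E F M c : ℚ) / 2

/-- `T'` is deficient: `credit(T') < |U'| + |M'| + 1`. -/
def DeficientQ (t : Tree V) (I E F M : Finset (Sym2 V)) (c : QT t I) : Prop :=
  creditQ t I E F M c < ((UsetQ t I M c).card : ℚ) + ((MlinksQ t I M c).card : ℚ) + 1

/-! ### Invariants and greedy steps -/

/-- Credit Invariant: the credit of every subtree of `T/I` is distributed as described:
coupons on unmatched leaves, compound nodes and links of `M`, tickets on links of `N` and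
original nodes of `X`. -/
def CreditInvariant (t : Tree V) (E F M I : Finset (Sym2 V)) : Prop :=
  F ⊆ E ∧ M ⊆ E ∧
  ∀ c : QT t I, creditQ t I E F M c = couponsQ t I M c + (ticketsQ t I E F M c : ℚ) / 2

/-- Degree in `T/I` : the number of links of `F` with exactly one end in the class of `x`. -/
noncomputable def qdegQ (t : Tree V) (I F : Finset (Sym2 V)) (x : V) : ℕ :=
  (F.filter (fun e => (∃ z, z ∈ e ∧ rel t I z x) ∧ ∃ z, z ∈ e ∧ ¬ rel t I z x)).card

/-- Matching Invariant: `M` is a matching on the leaves of `T/I` and `d_F(b) = 1` for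
every leaf `b` of `T/I` matched by `M`. -/
def MatchingInvariant (t : Tree V) (F M I : Finset (Sym2 V)) : Prop :=
  IsLeafMatchingQ t I M ∧ ∀ e ∈ M, ∀ b, b ∈ e → qdegQ t I F b = 1

/-- A greedy locking-tree contraction step. -/
def LockStep (t : Tree V) (E M : Finset (Sym2 V)) (I I₂ : Finset (Sym2 V)) : Prop :=
  ∃ a b b' v u,
    IsLockingTree t E a b b' v ∧
    (∀ e ∈ M, a ∉ e) ∧ (∀ e ∈ M, b ∉ e) ∧ (∀ e ∈ M, b' ∉ e) ∧
    (∀ c c' v', IsLockingTree t E b c c' v' → t.desc v v') ∧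
    IsUpLink t E a u ∧ I₂ = I ∪ {s(b, b'), s(a, u)}

/-- A greedy link contraction step: contract a link of `E` joining two `M`-unmatched
leaves of `T/I`. -/
def LinkStep (t : Tree V) (E M : Finset (Sym2 V)) (I I₂ : Finset (Sym2 V)) : Prop :=
  ∃ x y, s(x, y) ∈ E ∧ ¬ rel t I x y ∧ qleafRep t I x ∧ qleafRep t I y ∧
    ¬ matchedRep t I M x ∧ ¬ matchedRep t I M y ∧ I₂ = insert (s(x, y)) I

/-- Contraction of a semi-closed tree with an exact cover. -/
def SemiStep (t : Tree V) (E M : Finset (Sym2 V)) (I I₂ : Finset (Sym2 V)) : Prop :=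
  ∃ (c : QT t I) (I' : Finset (Sym2 V)), I' ⊆ E ∧ SemiClosedQ t I E M c ∧
    IsExactCoverQ t I c I' ∧ I₂ = I ∪ I'

/-- A sequence of greedy locking-tree contractions starting from the empty partial solution. -/
inductive LockPhase {V : Type} [Fintype V] [DecidableEq V]
    (t : Tree V) (E M : Finset (Sym2 V)) : Finset (Sym2 V) → Prop where
  | base : LockPhase t E M ∅
  | step {I I₂ : Finset (Sym2 V)} :
      LockPhase t E M I → LockStep t E M I I₂ → LockPhase t E M I₂

/-- Partial Solution Invariant: `I` is obtained by first exhausting greedy locking-tree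
contractions, and then sequentially applying greedy link contractions or contractions of
semi-closed trees with exact covers. -/
inductive PSI {V : Type} [Fintype V] [DecidableEq V]
    (t : Tree V) (E M : Finset (Sym2 V)) : Finset (Sym2 V) → Prop where
  | start {I : Finset (Sym2 V)} :
      LockPhase t E M I → (∀ I₂, ¬ LockStep t E M I I₂) → PSI t E M I
  | link {I I₂ : Finset (Sym2 V)} : PSI t E M I → LinkStep t E M I I₂ → PSI t E M I₂
  | semi {I I₂ : Finset (Sym2 V)} : PSI t E M I → SemiStep t E M I I₂ → PSI t E M I₂

/-! ### Dangerous trees -/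

/-- The witness structure of a 3-leaf dangerous tree: `a` is the unmatched leaf,
`b, b'` are the matched leaves, `ab' ∈ E`, the contraction of `ab'` does not create a new
leaf, and `T'` is `b`-open. -/
def Witness3 (t : Tree V) (I E M : Finset (Sym2 V)) (c : QT t I) (a b b' : V) : Prop :=
  inT t I c a ∧ inT t I c b ∧ inT t I c b' ∧
  qleafRep t I a ∧ qleafRep t I b ∧ qleafRep t I b' ∧
  ¬ rel t I a b ∧ ¬ rel t I a b' ∧ ¬ rel t I b b' ∧
  ¬ matchedRep t I M a ∧ matchedRep t I M b ∧ matchedRep t I M b' ∧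
  (∃ x y, s(x, y) ∈ E ∧ rel t I x a ∧ rel t I y b' ∧
    ¬ qleafRep t (insert (s(x, y)) I) x) ∧
  (∃ u, qUpNode t I E b u ∧ ¬ inT t I c u)

/-- A 3-leaf dangerous tree. -/
def Dangerous3 (t : Tree V) (I E M : Finset (Sym2 V)) (c : QT t I) : Prop :=
  SemiClosedQ t I E M c ∧ (CsetQ t I c).card = 0 ∧ (MlinksQ t I M c).card = 1 ∧
  (LsetQ t I c).card = 3 ∧ (SsetQ t I E c).card = 0 ∧
  ∃ a b b', Witness3 t I E M c a b b'

/-- A dangerous tree: a 3-leaf dangerous tree, or a 4-leaf tree with one stem, exactly one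
twin of which is matched, such that contracting the twin link yields a 3-leaf dangerous tree. -/
def Dangerous (t : Tree V) (I E M : Finset (Sym2 V)) (c : QT t I) : Prop :=
  Dangerous3 t I E M c ∨
  (SemiClosedQ t I E M c ∧ (CsetQ t I c).card = 0 ∧ (MlinksQ t I M c).card = 1 ∧
    (LsetQ t I c).card = 4 ∧ (SsetQ t I E c).card = 1 ∧
    ∃ a b, qTwinAt t I E a b ∧ inT t I c a ∧ inT t I c b ∧
      (matchedRep t I M a ↔ ¬ matchedRep t I M b) ∧
      Dangerous3 t (insert (s(a, b)) I) E M (qm t (insert (s(a, b)) I) c.out))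

/-! ### The switching construction -/

/-- `W̃` : for every 4-leaf minimally semi-closed (dangerous) tree of `T/I`, its twin link. -/
noncomputable def Wtil (t : Tree V) (I E M : Finset (Sym2 V)) : Finset (Sym2 V) :=
  E.filter (fun e => ∃ (a b : V) (c : QT t I), e = s(a, b) ∧ MinSemiClosedQ t I E M c ∧
    (LsetQ t I c).card = 4 ∧ qTwinAt t I E a b ∧ inT t I c a ∧ inT t I c b)

/-- The canonical ordering witness of a 3-leaf dangerous tree: if both orderings of the
matched leaves qualify, the up-node of `b` is an ancestor of the up-node of `b'`. -/
def Witness3Canon (t : Tree V) (I E M : Finset (Sym2 V)) (c : QT t I) (a b b' : V) : Prop :=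
  Witness3 t I E M c a b b' ∧
  (Witness3 t I E M c a b' b →
    ∃ u u', qUpNode t I E b u ∧ qUpNode t I E b' u' ∧ qdescRep t I u u')

/-- `M̃` is obtained from `M` by switching, in each (3-leaf dangerous) tree `D̃` of `T̃`
corresponding to a minimally semi-closed tree of `T/I`, the matching link `bb'` to `ab'`. -/
def SwitchedMatching (t : Tree V) (I E M Mt : Finset (Sym2 V)) : Prop :=
  ∀ e : Sym2 V, e ∈ Mt ↔
    ((e ∈ M ∧ ∀ c : QT t I, MinSemiClosedQ t I E M c →
        ∀ x, x ∈ e → ¬ inT t (I ∪ Wtil t I E M) (qm t (I ∪ Wtil t I E M) c.out) x) ∨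
     (∃ (c : QT t I) (a b b' x y : V), MinSemiClosedQ t I E M c ∧
        Witness3Canon t (I ∪ Wtil t I E M) E M (qm t (I ∪ Wtil t I E M) c.out) a b b' ∧
        e = s(x, y) ∧ e ∈ E ∧ rel t (I ∪ Wtil t I E M) x a ∧
        rel t (I ∪ Wtil t I E M) y b' ∧
        ¬ qleafRep t (insert e (I ∪ Wtil t I E M)) x))

/-- for twins `a,b` with stem `st` and `T_st = P(st,a) ∪ P(st,b)`,
the set `F'` of links of `F` with an end in `T_st` is either `{ab, st z}` for some
`z ∉ T_st`, or `{ax, by}` for some `x, y ∉ T_st`. -/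
theorem twin_links_structure (t : Tree V) (E F : Finset (Sym2 V))
    (hnd : ∀ e ∈ E, ¬ e.IsDiag) (hsh : ShadowClosed t E) (hF : IsGoodCover t E F)
    (a b st : V) (hab : TwinPair t a b) (habE : s(a, b) ∈ E) (hst : t.IsLCA st a b) :
    (∃ z : V, ¬ (t.onPathNode z st a ∨ t.onPathNode z st b) ∧
        F.filter (fun e => ∃ x, x ∈ e ∧ (t.onPathNode x st a ∨ t.onPathNode x st b)) =
          {s(a, b), s(st, z)}) ∨
    (∃ x y : V, ¬ (t.onPathNode x st a ∨ t.onPathNode x st b) ∧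
        ¬ (t.onPathNode y st a ∨ t.onPathNode y st b) ∧
        F.filter (fun e => ∃ x', x' ∈ e ∧ (t.onPathNode x' st a ∨ t.onPathNode x' st b)) =
          {s(a, x), s(b, y)}) := by
  classical
  obtain ⟨hFE, hsm, hopt, hmax⟩ := id hF
  have hndF : ∀ e ∈ F, ¬ e.IsDiag := fun e he => hnd e (hFE he)
  have hcov := hsm.1
  have hP : ∀ x, (t.onPathNode x st a ∨ t.onPathNode x st b) ↔ t.desc st x := by
    intro x
    constructor
    · rintro (h | h)
      · exact h.2 st (t.desc_refl st) hst.1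
      · exact h.2 st (t.desc_refl st) hst.2.1
    · intro h
      rcases twin_subtree t hab hst x h with hx | hx
      · exact Or.inl ⟨Or.inr hx, fun w hw1 _ => t.desc_trans h hw1⟩
      · exact Or.inr ⟨Or.inr hx, fun w hw1 _ => t.desc_trans h hw1⟩
  have hstr : st ≠ t.root := stem_ne_root t hab hst
  have haleaf := hab.1
  have hbleaf := hab.2.1
  have edge_ab : ∀ w, t.desc st w → w ≠ st → t.onPath w a b := by
    intro w hw hwne
    rcases twin_subtree t hab hst w hw with h | h
    · exact Or.inl ⟨h, fun hb' => hwne (t.desc_antisymm (hst.2.2 w h hb') hw)⟩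
    · exact Or.inr ⟨h, fun ha' => hwne (t.desc_antisymm (hst.2.2 w ha' h) hw)⟩
  by_cases habF : s(a, b) ∈ F
  · -- Case 1 : the twin link is in F
    left
    have claimA : ∀ f ∈ F, f ≠ s(a, b) → ∀ u, u ∈ f → t.desc st u →
        ∃ z, ¬ t.desc st z ∧ f = s(st, z) := by
      intro f hf hfab u hu hud
      obtain ⟨z, rfl⟩ := Sym2.mem_iff_exists.mp hu
      by_cases hzT : t.desc st z
      · exfalso
        refine hsm.2.1 _ hf ?_
        intro w hw
        obtain ⟨g, hg, hcg⟩ := hcov w hw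
        by_cases hge : g = s(u, z)
        · rw [hge, covers_mk_iff] at hcg
          obtain ⟨hdw, hwne⟩ := onPath_inside t hud hzT hcg
          exact ⟨s(a, b), Finset.mem_erase.mpr ⟨Ne.symm hfab, habF⟩,
            (covers_mk_iff t).mpr (edge_ab w hdw hwne)⟩
        · exact ⟨g, Finset.mem_erase.mpr ⟨hge, hg⟩, hcg⟩
      · by_cases hust : u = st
        · exact ⟨z, hzT, by rw [hust]⟩
        · exfalso
          refine hsm.2.2 _ hf s(st, z) ⟨shadow_anc t hud hzT, u, ?_, ?_⟩ ?_
          · exact (covers_mk_iff t).mpr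
              (Or.inl ⟨t.desc_refl u, fun h => hzT (t.desc_trans h hud)⟩)
          · intro hcc
            rw [covers_mk_iff] at hcc
            rcases hcc with ⟨h1, _⟩ | ⟨h1, _⟩
            · exact hust (t.desc_antisymm h1 hud)
            · exact hzT (t.desc_trans h1 hud)
          · refine isCover_insert_erase t hcov ?_
            intro w hw hcw
            rw [covers_mk_iff] at hcw
            rcases onPath_decomp t hud hzT hcw with h | ⟨hdw, _, hwne⟩
            · exact ⟨s(st, z), Finset.mem_insert_self _ _, (covers_mk_iff t).mpr h⟩
            · exact ⟨s(a, b), Finset.mem_insert_of_mem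
                (Finset.mem_erase.mpr ⟨Ne.symm hfab, habF⟩),
                (covers_mk_iff t).mpr (edge_ab w hdw hwne)⟩
    obtain ⟨f0, hf0, hcf0⟩ := hcov st hstr
    have hf0ab : f0 ≠ s(a, b) := by
      rintro rfl
      rw [covers_mk_iff] at hcf0
      rcases hcf0 with ⟨_, h2⟩ | ⟨_, h2⟩
      · exact h2 hst.2.1
      · exact h2 hst.1
    obtain ⟨u0, v0, hef0, hp0⟩ := hcf0
    have hu0 : ∃ u ∈ f0, t.desc st u := by
      rcases hp0 with ⟨h1, _⟩ | ⟨h1, _⟩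
      · exact ⟨u0, hef0 ▸ Sym2.mem_mk_left u0 v0, h1⟩
      · exact ⟨v0, hef0 ▸ Sym2.mem_mk_right u0 v0, h1⟩
    obtain ⟨u0', hu0m, hu0d⟩ := hu0
    obtain ⟨z0, hz0, hf0eq⟩ := claimA f0 hf0 hf0ab u0' hu0m hu0d
    have huniq : ∀ f ∈ F, ∀ z, ¬ t.desc st z → f = s(st, z) → f = s(st, z0) := by
      intro f hf z hz hfz
      by_contra hne
      have hnef0 : f ≠ f0 := fun h => hne (h.trans hf0eq)
      subst hfz
      refine hsm.2.2 _ hf s(t.parent st, z) ⟨shadow_parent t hz, st, ?_, ?_⟩ ?_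
      · exact (covers_mk_iff t).mpr (Or.inl ⟨t.desc_refl st, hz⟩)
      · intro hcc
        rw [covers_mk_iff] at hcc
        rcases hcc with ⟨h1, _⟩ | ⟨h1, _⟩
        · exact t.parent_ne_self hstr (t.desc_antisymm h1 (t.desc_parent st)).symm
        · exact hz h1
      · refine isCover_insert_erase t hcov ?_
        intro w hw hcw
        rw [covers_mk_iff] at hcw
        rcases onPath_parent_decomp t hz hcw with h | hws
        · exact ⟨s(t.parent st, z), Finset.mem_insert_self _ _, (covers_mk_iff t).mpr h⟩
        · refine ⟨f0, Finset.mem_insert_of_mem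
            (Finset.mem_erase.mpr ⟨Ne.symm hnef0, hf0⟩), ?_⟩
          rw [hf0eq, covers_mk_iff]
          rw [hws]
          exact Or.inl ⟨t.desc_refl st, hz0⟩
    refine ⟨z0, fun h => hz0 ((hP z0).1 h), ?_⟩
    ext e
    simp only [Finset.mem_filter, Finset.mem_insert, Finset.mem_singleton]
    constructor
    · rintro ⟨heF, u, hu, hpu⟩
      have hud := (hP u).1 hpu
      by_cases heab : e = s(a, b)
      · exact Or.inl heab
      · obtain ⟨z, hz, heq⟩ := claimA e heF heab u hu hud
        exact Or.inr (huniq e heF z hz heq)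
    · rintro (rfl | rfl)
      · exact ⟨habF, a, Sym2.mem_mk_left a b, (hP a).2 hst.1⟩
      · exact ⟨hf0eq ▸ hf0, st, Sym2.mem_mk_left st z0, (hP st).2 (t.desc_refl st)⟩
  · -- Case 2 : the twin link is not in F
    right
    obtain ⟨x, hxF, hux⟩ := leaf_link_unique t hndF hsm haleaf
    obtain ⟨y, hyF, huy⟩ := leaf_link_unique t hndF hsm hbleaf
    have hxout : ¬ t.desc st x := no_inner_link t E F hnd hsh hF hab habE hst habF hxF
    have hyout : ¬ t.desc st y := by
      have hab' := twinPair_symm t hab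
      have hst' := isLCA_symm t hst
      have habE' : s(b, a) ∈ E := by rw [Sym2.eq_swap]; exact habE
      have habF' : s(b, a) ∉ F := by rw [Sym2.eq_swap]; exact habF
      exact no_inner_link t E F hnd hsh hF hab' habE' hst' habF' hyF
    have hcov_ea : ∀ w, t.desc st w → t.desc w a → covers t s(a, x) w := by
      intro w hw hwa
      exact (covers_mk_iff t).mpr (Or.inl ⟨hwa, fun h => hxout (t.desc_trans h hw)⟩)
    have hcov_eb : ∀ w, t.desc st w → t.desc w b → covers t s(b, y) w := by
      intro w hw hwb
      exact (covers_mk_iff t).mpr (Or.inl ⟨hwb, fun h => hyout (t.desc_trans h hw)⟩)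
    refine ⟨x, y, fun h => hxout ((hP x).1 h), fun h => hyout ((hP y).1 h), ?_⟩
    ext e
    simp only [Finset.mem_filter, Finset.mem_insert, Finset.mem_singleton]
    constructor
    · rintro ⟨heF, u, hu, hpu⟩
      have hud := (hP u).1 hpu
      by_cases hae : a ∈ e
      · exact Or.inl (hux e heF hae)
      by_cases hbe : b ∈ e
      · exact Or.inr (huy e heF hbe)
      exfalso
      have hena : e ≠ s(a, x) := fun h => hae (by rw [h]; exact Sym2.mem_mk_left a x)
      have henb : e ≠ s(b, y) := fun h => hbe (by rw [h]; exact Sym2.mem_mk_left b y)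
      obtain ⟨z, rfl⟩ := Sym2.mem_iff_exists.mp hu
      by_cases hzT : t.desc st z
      · refine hsm.2.1 _ heF ?_
        intro w hw
        obtain ⟨g, hg, hcg⟩ := hcov w hw
        by_cases hge : g = s(u, z)
        · rw [hge, covers_mk_iff] at hcg
          obtain ⟨hdw, _⟩ := onPath_inside t hud hzT hcg
          rcases twin_subtree t hab hst w hdw with hwa | hwb
          · exact ⟨s(a, x), Finset.mem_erase.mpr ⟨Ne.symm hena, hxF⟩, hcov_ea w hdw hwa⟩
          · exact ⟨s(b, y), Finset.mem_erase.mpr ⟨Ne.symm henb, hyF⟩, hcov_eb w hdw hwb⟩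
        · exact ⟨g, Finset.mem_erase.mpr ⟨hge, hg⟩, hcg⟩
      · by_cases hust : u = st
        · refine hsm.2.2 _ heF s(t.parent st, z) ⟨?_, st, ?_, ?_⟩ ?_
          · rw [hust]
            exact shadow_parent t hzT
          · rw [hust, covers_mk_iff]
            exact Or.inl ⟨t.desc_refl st, hzT⟩
          · intro hcc
            rw [covers_mk_iff] at hcc
            rcases hcc with ⟨h1, _⟩ | ⟨h1, _⟩
            · exact t.parent_ne_self hstr (t.desc_antisymm h1 (t.desc_parent st)).symm
            · exact hzT h1
          · refine isCover_insert_erase t hcov ?_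
            intro w hw hcw
            rw [covers_mk_iff, hust] at hcw
            rcases onPath_parent_decomp t hzT hcw with h | hws
            · exact ⟨s(t.parent st, z), Finset.mem_insert_self _ _, (covers_mk_iff t).mpr h⟩
            · refine ⟨s(a, x), Finset.mem_insert_of_mem
                (Finset.mem_erase.mpr ⟨Ne.symm hena, hxF⟩), ?_⟩
              rw [covers_mk_iff, hws]
              exact Or.inl ⟨hst.1, hxout⟩
        · refine hsm.2.2 _ heF s(st, z) ⟨shadow_anc t hud hzT, u, ?_, ?_⟩ ?_
          · exact (covers_mk_iff t).mpr
              (Or.inl ⟨t.desc_refl u, fun h => hzT (t.desc_trans h hud)⟩)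
          · intro hcc
            rw [covers_mk_iff] at hcc
            rcases hcc with ⟨h1, _⟩ | ⟨h1, _⟩
            · exact hust (t.desc_antisymm h1 hud)
            · exact hzT (t.desc_trans h1 hud)
          · refine isCover_insert_erase t hcov ?_
            intro w hw hcw
            rw [covers_mk_iff] at hcw
            rcases onPath_decomp t hud hzT hcw with h | ⟨hdw, _, _⟩
            · exact ⟨s(st, z), Finset.mem_insert_self _ _, (covers_mk_iff t).mpr h⟩
            · rcases twin_subtree t hab hst w hdw with hwa | hwb
              · exact ⟨s(a, x), Finset.mem_insert_of_mem
                  (Finset.mem_erase.mpr ⟨Ne.symm hena, hxF⟩), hcov_ea w hdw hwa⟩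
              · exact ⟨s(b, y), Finset.mem_insert_of_mem
                  (Finset.mem_erase.mpr ⟨Ne.symm henb, hyF⟩), hcov_eb w hdw hwb⟩
    · rintro (rfl | rfl)
      · exact ⟨hxF, a, Sym2.mem_mk_left a x, (hP a).2 hst.1⟩
      · exact ⟨hyF, b, Sym2.mem_mk_left b y, (hP b).2 hst.2.1⟩

end TAP
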